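/- Let (I, J) be an l_1-admissible pair with |I| = a, |J| = b = a+c, and set l'_1 = l_1 + c − a − max(l_1+c−k, 0) and l'_2 = k − c. Then the vectors ρ'(I,J) = κ(Ĩ) − κ[l'_1+1, k] and σ'(I,J) = κ(J) − κ(I) − κ[l'_2+1, k] satisfy: all components are ≥ 0, and the k-th components ρ'(I,J)_k and σ'(I,J)_k are both 0. -/

import Mathlib

/-- `κ(I)_α = #{i ∈ I : i ≤ α}`. -/
def kappa (I : Finset ℕ) (α : ℕ) : ℤ := ((I.filter (fun i => i ≤ α)).card : ℤ)

/-- The set `Ĩ`: for `l₁+c < k`, `I` together with the complement `[l₁+1,k] \ J`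
minus its `p − a` smallest elements; for `l₁+c ≥ k`, just `I`. -/
def Itilde (k l1 a c p : ℕ) (I J : Finset ℕ) : Finset ℕ :=
  if l1 + c < k then
    I ∪ (((Finset.Icc (l1 + 1) k \ J).sort (· ≤ ·)).drop (p - a)).toFinset
  else I

lemma kappa_nonneg (I : Finset ℕ) (α : ℕ) : 0 ≤ kappa I α := Int.natCast_nonneg _

lemma kappa_le_card (I : Finset ℕ) (α : ℕ) : kappa I α ≤ I.card := by
  unfold kappa
  exact_mod_cast Finset.card_filter_le _ _

lemma kappa_eq_card (k : ℕ) (I : Finset ℕ) (hI : I ⊆ Finset.Icc 1 k) :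
    kappa I k = I.card := by
  unfold kappa
  congr 1
  rw [Finset.filter_true_of_mem]
  intro x hx
  exact (Finset.mem_Icc.1 (hI hx)).2

lemma kappa_ge (k α : ℕ) (hα : α ≤ k) (I : Finset ℕ) (hI : I ⊆ Finset.Icc 1 k) :
    (I.card : ℤ) - ((k : ℤ) - (α : ℤ)) ≤ kappa I α := by
  have h1 : I.filter (fun i => ¬ i ≤ α) ⊆ Finset.Icc (α + 1) k := by
    intro x hx
    simp only [Finset.mem_filter] at hx
    have := Finset.mem_Icc.1 (hI hx.1)
    exact Finset.mem_Icc.2 ⟨by omega, this.2⟩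
  have h2 := Finset.card_le_card h1
  rw [Nat.card_Icc] at h2
  have h3 := Finset.card_filter_add_card_filter_not (s := I)
    (p := fun i => i ≤ α)
  unfold kappa
  omega

lemma kappa_Icc (m k α : ℕ) : kappa (Finset.Icc (m + 1) k) α = ((min k α - m : ℕ) : ℤ) := by
  unfold kappa
  congr 1
  rw [show Finset.filter (fun i => i ≤ α) (Finset.Icc (m + 1) k)
      = Finset.Icc (m + 1) (min k α) by
    ext x
    simp only [Finset.mem_filter, Finset.mem_Icc]
    omega]
  rw [Nat.card_Icc]
  omega

lemma kappa_image {n : ℕ} (u : Fin n → ℕ) (hu : Function.Injective u) (α : ℕ) :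
    kappa (Finset.image u Finset.univ) α
      = ((Finset.univ.filter (fun i => u i ≤ α)).card : ℤ) := by
  unfold kappa
  congr 1
  rw [Finset.filter_image, Finset.card_image_of_injective _ hu]

theorem stmt9 (k l1 a c : ℕ) (hl1 : l1 ≤ k)
    (u : Fin a → ℕ) (v : Fin (a + c) → ℕ) (hu : StrictMono u) (hv : StrictMono v)
    (hur : ∀ i, u i ∈ Finset.Icc 1 k) (hvr : ∀ i, v i ∈ Finset.Icc 1 k)
    (p : ℕ) (hp : p = (Finset.univ.filter (fun i : Fin (a + c) => v i ≤ l1)).card)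
    (hap : a ≤ p) (hpb : p ≤ a + c)
    (hadm : ∀ i : Fin a, v (Fin.castLE (hap.trans hpb) i) ≤ u i ∧
      u i < ((Finset.Icc (l1 + 1) k \ Finset.image v Finset.univ).sort (· ≤ ·)).getD
        (p - ((i : ℕ) + 1)) (k + 1)) :
    (∀ α ∈ Finset.Icc 1 k,
      0 ≤ kappa (Itilde k l1 a c p (Finset.image u Finset.univ) (Finset.image v Finset.univ)) α
            - kappa (Finset.Icc (l1 + c - a - (l1 + c - k) + 1) k) α ∧
      0 ≤ kappa (Finset.image v Finset.univ) α - kappa (Finset.image u Finset.univ) α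
            - kappa (Finset.Icc (k - c + 1) k) α) ∧
    kappa (Itilde k l1 a c p (Finset.image u Finset.univ) (Finset.image v Finset.univ)) k
        - kappa (Finset.Icc (l1 + c - a - (l1 + c - k) + 1) k) k = 0 ∧
    kappa (Finset.image v Finset.univ) k - kappa (Finset.image u Finset.univ) k
        - kappa (Finset.Icc (k - c + 1) k) k = 0 := by
  classical
  set I : Finset ℕ := Finset.image u Finset.univ with hI
  set J : Finset ℕ := Finset.image v Finset.univ with hJ
  have cardI : I.card = a := by
    rw [hI, Finset.card_image_of_injective _ hu.injective, Finset.card_univ, Fintype.card_fin]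
  have cardJ : J.card = a + c := by
    rw [hJ, Finset.card_image_of_injective _ hv.injective, Finset.card_univ, Fintype.card_fin]
  have hIk : I ⊆ Finset.Icc 1 k := by
    intro x hx
    obtain ⟨i, _, rfl⟩ := Finset.mem_image.1 hx
    exact hur i
  have hJk : J ⊆ Finset.Icc 1 k := by
    intro x hx
    obtain ⟨i, _, rfl⟩ := Finset.mem_image.1 hx
    exact hvr i
  have hak : a ≤ k := by
    have := Finset.card_le_card hIk
    rw [cardI, Nat.card_Icc] at this
    omega
  have hbk : a + c ≤ k := by
    have := Finset.card_le_card hJk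
    rw [cardJ, Nat.card_Icc] at this
    omega
  have hpl1 : p ≤ l1 := by
    rw [hp]
    calc (Finset.univ.filter (fun i : Fin (a + c) => v i ≤ l1)).card
        ≤ (Finset.Icc 1 l1).card := by
          apply Finset.card_le_card_of_injOn (fun i => v i)
          · intro i hi
            simp only [Finset.mem_coe, Finset.mem_filter] at hi
            exact Finset.mem_Icc.2 ⟨(Finset.mem_Icc.1 (hvr i)).1, hi.2⟩
          · exact fun i _ j _ h => hv.injective h
      _ = l1 := by rw [Nat.card_Icc]; omega
  -- the complement set and sorted list
  set C : Finset ℕ := Finset.Icc (l1 + 1) k \ J with hC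
  set L : List ℕ := C.sort (· ≤ ·) with hL
  have hLlen : L.length = C.card := Finset.length_sort _
  have hJfl1 : (J.filter (fun x => x ≤ l1)).card = p := by
    have := kappa_image v hv.injective l1
    rw [← hJ] at this
    unfold kappa at this
    rw [hp]
    exact_mod_cast this
  have hCcard : C.card + (a + c - p) = k - l1 := by
    have h1 : Finset.Icc (l1 + 1) k ∩ J = J.filter (fun x => ¬ x ≤ l1) := by
      ext x
      simp only [Finset.mem_inter, Finset.mem_filter, Finset.mem_Icc]
      constructor
      · rintro ⟨⟨h1, h2⟩, h3⟩
        exact ⟨h3, by omega⟩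
      · rintro ⟨h1, h2⟩
        have := Finset.mem_Icc.1 (hJk h1)
        exact ⟨⟨by omega, this.2⟩, h1⟩
    have h2 := Finset.card_sdiff_add_card_inter (Finset.Icc (l1 + 1) k) J
    rw [h1, Nat.card_Icc] at h2
    have h3 := Finset.card_filter_add_card_filter_not (s := J)
      (p := fun x => x ≤ l1)
    rw [← hC] at h2
    omega
  have hDnodup : (L.drop (p - a)).Nodup := (List.drop_sublist _ _).nodup (Finset.sort_nodup _ _)
  have hDcard : (L.drop (p - a)).toFinset.card = C.card - (p - a) := by
    rw [List.toFinset_card_of_nodup hDnodup, List.length_drop, hLlen]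
  have hDsub : ∀ y ∈ (L.drop (p - a)).toFinset, y ∈ Finset.Icc 1 k := by
    intro y hy
    have h1 : y ∈ C := (Finset.mem_sort (α := ℕ) (· ≤ ·)).1
      (List.mem_of_mem_drop (List.mem_toFinset.1 hy))
    have h2 := Finset.mem_Icc.1 (Finset.mem_sdiff.1 h1).1
    exact Finset.mem_Icc.2 ⟨by omega, h2.2⟩
  -- disjointness in the case l1 + c < k
  have hdisj : l1 + c < k → Disjoint I (L.drop (p - a)).toFinset := by
    intro hcase
    rcases Nat.eq_zero_or_pos a with ha | ha
    · rw [Finset.disjoint_left]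
      intro x hx
      exfalso
      have := cardI
      rw [ha] at this
      have hxne := Finset.card_ne_zero_of_mem hx
      omega
    · have hplt : p - a < L.length := by
        rw [hLlen]; omega
      rw [Finset.disjoint_left]
      intro x hxI hxD
      obtain ⟨i, _, rfl⟩ := Finset.mem_image.1 hxI
      have hlast : u ⟨a - 1, by omega⟩
          < (C.sort (· ≤ ·)).getD (p - (a - 1 + 1)) (k + 1) :=
        (hadm ⟨a - 1, by omega⟩).2
      rw [← hL] at hlast
      have e : a - 1 + 1 = a := by omega
      rw [e, List.getD_eq_getElem L _ hplt] at hlast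
      have hmono : u i ≤ u ⟨a - 1, by omega⟩ := hu.monotone (by
        have := i.isLt
        exact Fin.mk_le_mk.2 (by omega) |>.trans_eq rfl)
      -- x = u i is in the drop part: get its index
      obtain ⟨j, hj, hjx⟩ := List.mem_iff_getElem.1 (List.mem_toFinset.1 hxD)
      rw [List.getElem_drop] at hjx
      have hle : L[p - a]'hplt ≤ L[p - a + j]'(by
          rw [List.length_drop] at hj; omega) := by
        rcases Nat.eq_zero_or_pos j with rfl | hjpos
        · exact le_of_eq (by simp)
        · exact (List.pairwise_iff_getElem.1 (Finset.pairwise_sort (r := (· ≤ ·)) (s := C))) _ _ _ _ (by omega)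
      omega
  -- cardinality of Itilde
  have hItcard : (Itilde k l1 a c p I J).card = k - (l1 + c - a - (l1 + c - k)) := by
    unfold Itilde
    rw [← hC, ← hL]
    split_ifs with h
    · rw [Finset.card_union_of_disjoint (hdisj h), cardI, hDcard]
      omega
    · rw [cardI]
      omega
  have hItsub : Itilde k l1 a c p I J ⊆ Finset.Icc 1 k := by
    unfold Itilde
    rw [← hC, ← hL]
    split_ifs with h
    · exact Finset.union_subset hIk hDsub
    · exact hIk
  have hdom : ∀ α : ℕ, kappa I α ≤ kappa J α := by
    intro α
    rw [hI, hJ, kappa_image u hu.injective, kappa_image v hv.injective]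
    have : (Finset.univ.filter (fun i : Fin a => u i ≤ α)).card
        ≤ (Finset.univ.filter (fun i : Fin (a + c) => v i ≤ α)).card := by
      apply Finset.card_le_card_of_injOn (fun i => Fin.castLE (hap.trans hpb) i)
      · intro i hi
        simp only [Finset.mem_coe, Finset.mem_filter, Finset.mem_univ, true_and] at hi ⊢
        exact le_trans (hadm i).1 hi
      · intro i _ j _ h
        exact Fin.castLE_injective _ h
    exact_mod_cast this
  refine ⟨?_, ?_, ?_⟩
  · intro α hα
    obtain ⟨hα1, hα2⟩ := Finset.mem_Icc.1 hα
    constructor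
    · have h1 := kappa_ge k α hα2 _ hItsub
      have h2 := kappa_nonneg (Itilde k l1 a c p I J) α
      rw [kappa_Icc, min_eq_right hα2]
      omega
    · have h1 := kappa_ge k α hα2 J hJk
      have h2 := kappa_le_card I α
      have h3 := hdom α
      rw [kappa_Icc, min_eq_right hα2]
      omega
  · rw [kappa_eq_card k _ hItsub, kappa_Icc, min_self, hItcard]
    omega
  · rw [kappa_eq_card k _ hJk, kappa_eq_card k _ hIk, kappa_Icc, min_self, cardI, cardJ]
    omega
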